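/- For real numbers σ, τ, σ̃, τ̃, the complex numbers α(σ,τ) and α(σ̃,τ̃) are equal if and only if the multisets-as-sets {σ, τ, −(σ+τ)} and {σ̃, τ̃, −(σ̃+τ̃)} are equal as subsets of ℝ/ℤ. -/

import Mathlib

/-- `α(σ,τ) = e^{2πiσ} + e^{2πiτ} + e^{-2πi(σ+τ)}`. -/
noncomputable def alpha (σ τ : ℝ) : ℂ :=
  Complex.exp (2 * Real.pi * Complex.I * σ) + Complex.exp (2 * Real.pi * Complex.I * τ) +
    Complex.exp (-(2 * Real.pi * Complex.I * (σ + τ)))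

open Complex

/-- `e(x) = exp(2πix)`. -/
noncomputable def ee (x : ℝ) : ℂ := Complex.exp (2*Real.pi*I*x)

lemma ee_eq_iff (x y : ℝ) : ee x = ee y ↔ ((x : AddCircle (1:ℝ)) = y) := by
  have hne : (2*Real.pi*I : ℂ) ≠ 0 := by
    simp [Real.pi_ne_zero, Complex.I_ne_zero, Complex.ofReal_ne_zero]
  rw [ee, ee, Complex.exp_eq_exp_iff_exists_int, QuotientAddGroup.eq_iff_sub_mem]
  constructor
  · rintro ⟨n, h⟩
    have h2 : (x : ℂ) = (y : ℂ) + n := by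
      apply mul_left_cancel₀ hne
      rw [h]; ring
    have h3 : x - y = (n : ℝ) := by
      have : ((x - y : ℝ) : ℂ) = ((n:ℝ) : ℂ) := by push_cast; linear_combination h2
      exact_mod_cast this
    exact ⟨n, by simpa using h3.symm⟩
  · rintro hn
    rw [AddSubgroup.mem_zmultiples_iff] at hn
    obtain ⟨n, h⟩ := hn
    simp only [zsmul_eq_mul, mul_one] at h
    have hc : ((n:ℝ) : ℂ) = (x:ℂ) - y := by
      rw [h]; push_cast; ring
    exact ⟨n, by push_cast at hc ⊢; linear_combination (-(2*(Real.pi:ℂ)*I)) * hc⟩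

lemma ee_per : Function.Periodic ee 1 := by
  intro x
  unfold ee
  rw [Complex.exp_eq_exp_iff_exists_int]
  exact ⟨1, by push_cast; ring⟩

/-- The induced map `AddCircle 1 → ℂ`. -/
noncomputable def eeC : AddCircle (1:ℝ) → ℂ := ee_per.lift

lemma eeC_coe (x : ℝ) : eeC (x : AddCircle (1:ℝ)) = ee x := ee_per.lift_coe x

lemma eeC_inj : Function.Injective eeC := by
  intro q1 q2
  induction q1 using QuotientAddGroup.induction_on
  induction q2 using QuotientAddGroup.induction_on
  rw [eeC_coe, eeC_coe]
  exact fun h => (ee_eq_iff _ _).mp h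

lemma set_transfer (x y z x' y' z' : ℝ) :
    ({(x:AddCircle (1:ℝ)), (y:AddCircle (1:ℝ)), (z:AddCircle (1:ℝ))} : Set (AddCircle (1:ℝ))) =
        {(x':AddCircle (1:ℝ)), (y':AddCircle (1:ℝ)), (z':AddCircle (1:ℝ))} ↔
      ({ee x, ee y, ee z} : Set ℂ) = {ee x', ee y', ee z'} := by
  rw [← (Set.image_injective.2 eeC_inj).eq_iff]
  simp [Set.image_insert_eq, Set.image_singleton, eeC_coe]

lemma mem_aux (x a b c : ℂ) (h : (x-a)*(x-b)*(x-c) = 0) : x ∈ ({a,b,c} : Set ℂ) := by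
  rcases mul_eq_zero.mp h with h' | h'
  · rcases mul_eq_zero.mp h' with h'' | h'' <;> simp [sub_eq_zero.mp h'']
  · simp [sub_eq_zero.mp h']

lemma e2_eq (a b c : ℂ) (hua : a * (starRingEnd ℂ) a = 1) (hub : b * (starRingEnd ℂ) b = 1)
    (huc : c * (starRingEnd ℂ) c = 1) (h3 : a*b*c = 1) :
    a*b + b*c + c*a = (starRingEnd ℂ) a + (starRingEnd ℂ) b + (starRingEnd ℂ) c := by
  linear_combination ((starRingEnd ℂ) a + (starRingEnd ℂ) b + (starRingEnd ℂ) c) * h3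
    - (b*c)*hua - (c*a)*hub - (a*b)*huc

lemma set_eq_of_sum_eq (a b c a' b' c' : ℂ)
    (hp : a*b + b*c + c*a = a'*b' + b'*c' + c'*a')
    (h3 : a*b*c = 1) (h3' : a'*b'*c' = 1)
    (hs : a + b + c = a' + b' + c') :
    ({a,b,c} : Set ℂ) = {a',b',c'} := by
  apply Set.Subset.antisymm
  · intro x hx
    apply mem_aux
    rcases hx with rfl | rfl | rfl
    all_goals linear_combination x^2*hs - x*hp + h3 - h3'
  · intro x hx
    apply mem_aux
    rcases hx with rfl | rfl | rfl
    all_goals linear_combination -(x^2)*hs + x*hp - h3 + h3'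

set_option maxHeartbeats 1000000 in
lemma sum_eq_of_set_eq (a b c a' b' c' : ℂ)
    (ha : a ≠ 0) (hb : b ≠ 0) (hc : c ≠ 0)
    (h3 : a*b*c = 1) (h3' : a'*b'*c' = 1)
    (h : ({a,b,c} : Set ℂ) = {a',b',c'}) :
    a + b + c = a' + b' + c' := by
  have m1 : a' = a ∨ a' = b ∨ a' = c := by
    have : a' ∈ ({a,b,c} : Set ℂ) := h ▸ (by simp)
    simpa using this
  have m2 : b' = a ∨ b' = b ∨ b' = c := by
    have : b' ∈ ({a,b,c} : Set ℂ) := h ▸ (by simp)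
    simpa using this
  have m3 : c' = a ∨ c' = b ∨ c' = c := by
    have : c' ∈ ({a,b,c} : Set ℂ) := h ▸ (by simp)
    simpa using this
  have m4 : a = a' ∨ a = b' ∨ a = c' := by
    have : a ∈ ({a',b',c'} : Set ℂ) := h ▸ (by simp)
    simpa using this
  have m5 : b = a' ∨ b = b' ∨ b = c' := by
    have : b ∈ ({a',b',c'} : Set ℂ) := h ▸ (by simp)
    simpa using this
  have m6 : c = a' ∨ c = b' ∨ c = c' := by
    have : c ∈ ({a',b',c'} : Set ℂ) := h ▸ (by simp)
    simpa using this
  clear h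
  rcases m1 with rfl|rfl|rfl <;> rcases m2 with rfl|rfl|rfl <;> rcases m3 with rfl|rfl|rfl <;>
    rcases m4 with h4|h4|h4 <;> rcases m5 with h5|h5|h5 <;> rcases m6 with h6|h6|h6 <;>
    subst_vars <;>
    first
      | ring1
      | (try clear ha
         try clear hb
         try clear hc
         try clear h4
         try clear h5
         try clear h6
         revert h3 h3'
         rename ℂ => v₀
         revert v₀
         rename ℂ => u₀
         intro v₀ h3 h3'
         first
           | linear_combination v₀*h3 - u₀*h3'
           | linear_combination u₀*h3 - v₀*h3'
           | linear_combination -(v₀*h3) + u₀*h3'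
           | linear_combination -(u₀*h3) + v₀*h3')

lemma ee_unit (x : ℝ) : ee x * (starRingEnd ℂ) (ee x) = 1 := by
  rw [ee, ← Complex.exp_conj, ← Complex.exp_add]
  have hc : (starRingEnd ℂ) (2*Real.pi*I*x) = -(2*Real.pi*I*x) := by
    simp only [map_mul, Complex.conj_I, Complex.conj_ofReal, map_ofNat]
    ring
  rw [hc, add_neg_cancel, Complex.exp_zero]

lemma ee_ne_zero (x : ℝ) : ee x ≠ 0 := Complex.exp_ne_zero _

lemma ee_prod (x y : ℝ) : ee x * ee y * ee (-(x+y)) = 1 := by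
  rw [ee, ee, ee, ← Complex.exp_add, ← Complex.exp_add]
  rw [show 2*(Real.pi:ℂ)*I*x + 2*Real.pi*I*y + 2*Real.pi*I*((-(x+y):ℝ):ℂ) = 0 by push_cast; ring,
    Complex.exp_zero]

lemma alpha_eq (σ τ : ℝ) : alpha σ τ = ee σ + ee τ + ee (-(σ+τ)) := by
  rw [alpha, ee, ee, ee]
  congr 1
  exact congrArg Complex.exp (by push_cast; ring)

theorem alpha_eq_iff (σ τ σ' τ' : ℝ) :
    alpha σ τ = alpha σ' τ' ↔
      ({(σ : AddCircle (1:ℝ)), (τ : AddCircle (1:ℝ)), ((-(σ + τ) : ℝ) : AddCircle (1:ℝ))} :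
          Set (AddCircle (1:ℝ))) =
        ({(σ' : AddCircle (1:ℝ)), (τ' : AddCircle (1:ℝ)), ((-(σ' + τ') : ℝ) : AddCircle (1:ℝ))} :
          Set (AddCircle (1:ℝ))) := by
  rw [set_transfer, alpha_eq, alpha_eq]
  constructor
  · intro hs
    apply set_eq_of_sum_eq _ _ _ _ _ _ _ (ee_prod σ τ) (ee_prod σ' τ') hs
    have h1 := e2_eq _ _ _ (ee_unit σ) (ee_unit τ) (ee_unit (-(σ+τ))) (ee_prod σ τ)
    have h2 := e2_eq _ _ _ (ee_unit σ') (ee_unit τ') (ee_unit (-(σ'+τ'))) (ee_prod σ' τ')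
    have h3 := congrArg (starRingEnd ℂ) hs
    simp only [map_add] at h3
    exact h1.trans (h3.trans h2.symm)
  · intro h
    exact sum_eq_of_set_eq _ _ _ _ _ _ (ee_ne_zero _) (ee_ne_zero _) (ee_ne_zero _)
      (ee_prod σ τ) (ee_prod σ' τ') h
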